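/- arXiv:2501.12543 — 8 statements merged into one kernel-verified Lean document; each statement's English description precedes it below -/
import Mathlib

section
/- Let a, Γ satisfy 0 < a, 1 < Γ < 2, and 0 < a + Γ - 1 < 1, and define Q(x) = (x + (a/(Γ-1))((1+x)^(-(Γ-1)/a) - 1))/(a+Γ-1) for x > -1. Then Q(x) ≥ 0 for all x > -1, and Q(x) = 0 if and only if x = 0. -/
noncomputable def Qfun (a Γ x : ℝ) : ℝ :=
  (x + (a/(Γ-1)) * ((1+x) ^ (-(Γ-1)/a) - 1)) / (a+Γ-1)

open Real Set in
lemma bern_neg_strict {r t : ℝ} (hr : r < 0) (ht : 0 < t) (ht1 : t ≠ 1) :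
    1 + r * (t - 1) < t ^ r := by
  set g : ℝ → ℝ := fun s => s ^ r - 1 - r * (s - 1) with hg
  have hderiv : ∀ s : ℝ, 0 < s → HasDerivAt g (r * s ^ (r - 1) - r) s := by
    intro s hs
    have h1 : HasDerivAt (fun x : ℝ => x ^ r) (r * s ^ (r - 1)) s := by
      simpa [mul_comm] using Real.hasDerivAt_rpow_const (x := s) (p := r) (Or.inl hs.ne')
    have h2 : HasDerivAt (fun x : ℝ => r * (x - 1)) r s := by
      simpa using ((hasDerivAt_id s).sub_const 1).const_mul r
    exact (h1.sub_const 1).sub h2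
  have key : 0 < g t := by
    rcases lt_or_gt_of_ne ht1 with hlt | hgt
    · -- t < 1 : g strictly anti on Ioc 0 1
      have hanti : StrictAntiOn g (Ioc 0 1) := by
        apply strictAntiOn_of_deriv_neg (convex_Ioc 0 1)
        · apply ContinuousOn.sub (ContinuousOn.sub ?_ continuousOn_const)
            (by fun_prop)
          intro s hs
          exact (Real.continuousAt_rpow_const s r (Or.inl hs.1.ne')).continuousWithinAt
        · intro s hs
          rw [interior_Ioc] at hs
          rw [(hderiv s hs.1).deriv]
          have : 1 < s ^ (r - 1) :=
            Real.one_lt_rpow_iff_of_pos hs.1 |>.mpr (Or.inr ⟨hs.2, by linarith⟩)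
          nlinarith
      have := hanti ⟨ht, hlt.le⟩ ⟨one_pos, le_refl 1⟩ hlt
      simpa [hg, Real.one_rpow] using this
    · -- t > 1 : g strictly mono on Ici 1
      have hmono : StrictMonoOn g (Ici 1) := by
        apply strictMonoOn_of_deriv_pos (convex_Ici 1)
        · apply ContinuousOn.sub (ContinuousOn.sub ?_ continuousOn_const)
            (by fun_prop)
          intro s hs
          have hs0 : (0:ℝ) < s := lt_of_lt_of_le one_pos hs
          exact (Real.continuousAt_rpow_const s r (Or.inl hs0.ne')).continuousWithinAt
        · intro s hs
          rw [interior_Ici] at hs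
          have hs0 : (0:ℝ) < s := lt_trans one_pos hs
          rw [(hderiv s hs0).deriv]
          have : s ^ (r - 1) < 1 :=
            Real.rpow_lt_one_of_one_lt_of_neg hs (by linarith)
          nlinarith
      have := hmono (mem_Ici.mpr le_rfl) (le_of_lt hgt) hgt
      simpa [hg, Real.one_rpow] using this
  have : 0 < t ^ r - 1 - r * (t - 1) := key
  linarith

theorem stmt_2 (a Γ : ℝ) (ha : 0 < a) (hΓ1 : 1 < Γ) (hΓ2 : Γ < 2)
    (h1 : 0 < a + Γ - 1) (h2 : a + Γ - 1 < 1) :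
    ∀ x : ℝ, -1 < x → (0 ≤ Qfun a Γ x ∧ (Qfun a Γ x = 0 ↔ x = 0)) := by
  intro x hx
  set r : ℝ := -(Γ-1)/a with hrdef
  have hΓ1' : 0 < Γ - 1 := by linarith
  have hr : r < 0 := by
    rw [hrdef]
    exact div_neg_of_neg_of_pos (by linarith) ha
  have hc : 0 < a / (Γ - 1) := div_pos ha hΓ1'
  have hcr : (a / (Γ - 1)) * r = -1 := by
    rw [hrdef]; field_simp
  have ht : 0 < 1 + x := by linarith
  -- numerator N
  set N : ℝ := x + (a/(Γ-1)) * ((1+x) ^ r - 1) with hN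
  have hpos : x ≠ 0 → 0 < N := by
    intro hx0
    have ht1 : (1 + x) ≠ 1 := by intro h; apply hx0; linarith
    have hb := bern_neg_strict hr ht ht1
    have : (a/(Γ-1)) * (1 + r * ((1+x) - 1)) < (a/(Γ-1)) * (1+x) ^ r :=
      (mul_lt_mul_iff_right₀ hc).mpr hb
    have hcrx : (a/(Γ-1)) * (r * x) = -x := by
      rw [← mul_assoc, hcr]; ring
    rw [hN]; nlinarith [hcrx]
  have hzero : Qfun a Γ 0 = 0 := by
    simp [Qfun, hrdef, Real.one_rpow]
  constructor
  · rcases eq_or_ne x 0 with rfl | hx0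
    · rw [hzero]
    · have := hpos hx0
      have : 0 < N / (a + Γ - 1) := div_pos this h1
      simpa [Qfun, hN, hrdef] using this.le
  · constructor
    · intro hQ
      by_contra hx0
      have hNpos := hpos hx0
      have : 0 < N / (a + Γ - 1) := div_pos hNpos h1
      have hQ' : N / (a + Γ - 1) = 0 := by simpa [Qfun, hN, hrdef] using hQ
      linarith [hQ'.symm ▸ this]
    · intro h; rw [h]; exact hzero
end

section
/- Let a, Γ satisfy 0 < a, 1 < Γ < 2, and 0 < a + Γ - 1 < 1, and define Q(x) = (x + (a/(Γ-1))((1+x)^(-(Γ-1)/a) - 1))/(a+Γ-1) and Q'(x) = (1 - (1+x)^(-(a+Γ-1)/a))/(a+Γ-1) for x > -1. Then the identity a(1+x)Q'(x) + (Γ-1)Q(x) - x = 0 holds for all x > -1. -/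
noncomputable def Qd (a Γ x : ℝ) : ℝ := (1 - (1+x) ^ (-(a+Γ-1)/a)) / (a+Γ-1)

theorem stmt_4 (a Γ : ℝ) (ha : 0 < a) (hΓ1 : 1 < Γ) (hΓ2 : Γ < 2)
    (h1 : 0 < a + Γ - 1) (h2 : a + Γ - 1 < 1) :
    ∀ x : ℝ, -1 < x →
      a * (1+x) * Qd a Γ x + (Γ-1) * Qfun a Γ x - x = 0 := by
  intro x hx
  have hu : (0:ℝ) < 1 + x := by linarith
  have key : (1+x) * (1+x) ^ (-(a+Γ-1)/a) = (1+x) ^ (-(Γ-1)/a) := by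
    have hexp : -(a+Γ-1)/a = -(Γ-1)/a + (-1) := by
      field_simp
      ring
    rw [hexp, Real.rpow_add hu, Real.rpow_neg_one]
    field_simp
  unfold Qd Qfun
  have hΓ : Γ - 1 ≠ 0 := by linarith
  have hs : a + Γ - 1 ≠ 0 := ne_of_gt h1
  set A := (1+x) ^ (-(Γ-1)/a) with hA
  set B := (1+x) ^ (-(a+Γ-1)/a) with hB
  field_simp
  linear_combination (-a) * key
end

section
/- Let a, Γ satisfy 0 < a, 1 < Γ < 2, and 0 < a + Γ - 1 < 1, let m, n, P, eth, s > 0 and x > -1, and define Q(x) = (x + (a/(Γ-1))((1+x)^(-(Γ-1)/a) - 1))/(a+Γ-1). Then F := (m n / P)(1 + eth) + (2-Γ)/(Γ-1) + Q(x) - x > 0. -/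
/-- Bernoulli's inequality for nonpositive real exponents. -/
lemma bern_neg (t β : ℝ) (ht : 0 < t) (hβ : 0 ≤ β) : 1 - β * (t - 1) ≤ t ^ (-β) := by
  rw [Real.rpow_def_of_pos ht]
  have h1 := Real.add_one_le_exp (Real.log t * (-β))
  have h2 := Real.log_le_sub_one_of_pos ht
  nlinarith [mul_nonneg hβ (sub_nonneg.mpr h2)]

theorem stmt_7 (a Γ m n P eth s x : ℝ) (ha : 0 < a) (hΓ1 : 1 < Γ) (hΓ2 : Γ < 2)
    (h1 : 0 < a + Γ - 1) (h2 : a + Γ - 1 < 1)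
    (hm : 0 < m) (hn : 0 < n) (hP : 0 < P) (heth : 0 < eth) (hs : 0 < s)
    (hx : -1 < x) :
    0 < (m * n / P) * (1 + eth) + (2-Γ)/(Γ-1) + Qfun a Γ x - x := by
  have hΓ : (0:ℝ) < Γ - 1 := by linarith
  have hane : a ≠ 0 := ha.ne'
  have hΓne : Γ - 1 ≠ 0 := hΓ.ne'
  have hdne : a + Γ - 1 ≠ 0 := h1.ne'
  have hu : (0:ℝ) < 1 - (a + Γ - 1) := by linarith
  set β : ℝ := (Γ-1)/a with hβdef
  have hβ : 0 < β := div_pos hΓ ha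
  set u : ℝ := 1 - (a + Γ - 1) with hudef
  set y : ℝ := 1 + x with hydef
  have hy : 0 < y := by rw [hydef]; linarith
  set y0 : ℝ := u ^ (-(a/(a+Γ-1))) with hy0def
  have hy0 : 0 < y0 := Real.rpow_pos_of_pos hu _
  set K : ℝ := u ^ ((Γ-1)/(a+Γ-1)) with hKdef
  have hK : 0 < K := Real.rpow_pos_of_pos hu _
  -- key rpow computations
  have hexp : -(a/(a+Γ-1)) * -β = (Γ-1)/(a+Γ-1) := by
    rw [hβdef]; field_simp
  have hexp2 : -(a/(a+Γ-1)) * -β - -(a/(a+Γ-1)) = 1 := by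
    rw [hβdef]; field_simp; ring
  have hy0β : y0 ^ (-β) = K := by
    rw [hy0def, ← Real.rpow_mul hu.le, hexp, hKdef]
  have hexp3 : (Γ-1)/(a+Γ-1) - -(a/(a+Γ-1)) = 1 := by
    field_simp; ring
  have hy0β1 : y0 ^ (-β) / y0 = u := by
    rw [hy0β, hKdef, hy0def, ← Real.rpow_sub hu, hexp3, Real.rpow_one]
  -- Bernoulli at y/y0
  have hb := bern_neg (y / y0) β (div_pos hy hy0) hβ.le
  have hmul : (y / y0) ^ (-β) * y0 ^ (-β) = y ^ (-β) := by
    rw [← Real.mul_rpow (div_pos hy hy0).le hy0.le, div_mul_cancel₀ _ hy0.ne']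
  have hlow : (1 + β) * K - β * u * y ≤ y ^ (-β) := by
    have h3 : (1 - β * (y / y0 - 1)) * y0 ^ (-β) ≤ (y / y0) ^ (-β) * y0 ^ (-β) := by
      apply mul_le_mul_of_nonneg_right hb (Real.rpow_nonneg hy0.le _)
    rw [hmul] at h3
    calc (1 + β) * K - β * u * y
        = (1 - β * (y / y0 - 1)) * y0 ^ (-β) := by
          have h4 : β * (y / y0) * y0 ^ (-β) = β * u * y := by
            rw [← hy0β1]; field_simp
          rw [← hy0β]
          linear_combination h4
      _ ≤ y ^ (-β) := h3
  -- rewrite Qfun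
  have hQ : Qfun a Γ x = (x + (a/(Γ-1)) * (y ^ (-β) - 1)) / (a+Γ-1) := by
    rw [Qfun, hydef, hβdef, neg_div]
  -- lower bound for Qfun
  have hQlow : (x + (a/(Γ-1)) * (((1+β) * K - β * u * y) - 1)) / (a+Γ-1) ≤ Qfun a Γ x := by
    rw [hQ]
    gcongr
    all_goals positivity
  have heq : (2-Γ)/(Γ-1) + (x + (a/(Γ-1)) * (((1+β) * K - β * u * y) - 1)) / (a+Γ-1) - x
      = K/(Γ-1) := by
    rw [hβdef, hudef, hydef]
    field_simp
    ring
  have hA : 0 < (m * n / P) * (1 + eth) := by positivity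
  have hKΓ : 0 < K / (Γ-1) := div_pos hK hΓ
  linarith
end

section
/- Let a, Γ satisfy 0 < a, 1 < Γ < 2, and 0 < a + Γ - 1 < 1, let ρ̃ ≥ 1/(Γ-1) and c > 0. Then the 4×4 symmetric matrix [[1+ρ̃, 0, -1, -1], [0, c, 0, 0], [-1, 0, 1/Γ, 0], [-1, 0, 0, 1/a]] is positive definite. -/
theorem stmt_11 (a Γ ρ c : ℝ) (ha : 0 < a) (hΓ1 : 1 < Γ) (hΓ2 : Γ < 2)
    (h1 : 0 < a + Γ - 1) (h2 : a + Γ - 1 < 1)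
    (hρ : 1/(Γ-1) ≤ ρ) (hc : 0 < c) :
    (Matrix.of ![![1+ρ, 0, -1, -1], ![0, c, 0, 0],
                 ![-1, 0, 1/Γ, 0], ![-1, 0, 0, 1/a]]).PosDef := by
  have hΓ0 : (0:ℝ) < Γ := by linarith
  have hΓ1' : (0:ℝ) < Γ - 1 := by linarith
  constructor
  · ext i j
    fin_cases i <;> fin_cases j <;> simp [Matrix.conjTranspose, Matrix.transpose, Matrix.vecHead, Matrix.vecTail]
  · intro x hx
    have hx0 : ¬ (x 0 = 0 ∧ x 1 = 0 ∧ x 2 = 0 ∧ x 3 = 0) := by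
      intro ⟨h0, h1', h2', h3⟩
      apply hx
      ext i; fin_cases i <;> assumption
    simp [Finsupp.sum_fintype, dotProduct, Matrix.mulVec, Fin.sum_univ_four, Matrix.vecHead, Matrix.vecTail]
    set x0 := x 0; set x1 := x 1; set x2 := x 2; set x3 := x 3
    -- key bound: 1 + ρ - Γ - a > 0
    have hkey : 0 < 1 + ρ - Γ - a := by
      have : 1/(Γ-1) + 1 - Γ - a = (Γ*(2-Γ-a) + a)/(Γ-1) := by field_simp; ring
      nlinarith [mul_pos hΓ0 (by linarith : (0:ℝ) < 2 - Γ - a),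
        div_pos (by nlinarith : (0:ℝ) < Γ*(2-Γ-a)+a) hΓ1']
    have hq : x0 * ((1 + ρ) * x0 + -x2 + -x3) + x1 * (c * x1) + x2 * (-x0 + Γ⁻¹ * x2)
        + x3 * (-x0 + a⁻¹ * x3)
        = (1+ρ-Γ-a)*x0^2 + c*x1^2 + (x2/Γ-x0)^2*Γ + (x3/a-x0)^2*a := by
      field_simp
      ring
    rw [show x0 * (1 + ρ) * x0 + -(x0 * x2) + -(x0 * x3) + x1 * c * x1 + (-(x2 * x0) + x2 * Γ⁻¹ * x2) +
      (-(x3 * x0) + x3 * a⁻¹ * x3) = x0 * ((1 + ρ) * x0 + -x2 + -x3) + x1 * (c * x1) + x2 * (-x0 + Γ⁻¹ * x2)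
        + x3 * (-x0 + a⁻¹ * x3) by ring]
    rw [hq]
    have sq2 : 0 ≤ (x2/Γ - x0)^2 * Γ := mul_nonneg (sq_nonneg _) hΓ0.le
    have sq3 : 0 ≤ (x3/a - x0)^2 * a := mul_nonneg (sq_nonneg _) ha.le
    have sq1 : 0 ≤ c * x1^2 := mul_nonneg hc.le (sq_nonneg _)
    have sq0 : 0 ≤ (1+ρ-Γ-a) * x0^2 := mul_nonneg hkey.le (sq_nonneg _)
    rcases eq_or_ne x0 0 with h0 | h0
    · rcases (by tauto : x1 ≠ 0 ∨ x2 ≠ 0 ∨ x3 ≠ 0) with h | h | h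
      · have : 0 < c * x1^2 := mul_pos hc (by rw [sq]; exact mul_self_pos.mpr h)
        linarith
      · have h' : x2/Γ - x0 ≠ 0 := by
          rw [h0, sub_zero]
          exact div_ne_zero h hΓ0.ne'
        have : 0 < (x2/Γ - x0)^2 * Γ :=
          mul_pos (by rw [sq]; exact mul_self_pos.mpr h') hΓ0
        linarith
      · have h' : x3/a - x0 ≠ 0 := by
          rw [h0, sub_zero]
          exact div_ne_zero h ha.ne'
        have : 0 < (x3/a - x0)^2 * a :=
          mul_pos (by rw [sq]; exact mul_self_pos.mpr h') ha
        linarith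
    · have : 0 < (1+ρ-Γ-a) * x0^2 :=
        mul_pos hkey (by rw [sq]; exact mul_self_pos.mpr h0)
      linarith
end

section
/- Let θ > 0 and let Π̃ : [0,∞) → ℝ be differentiable satisfying Π̃'(ξ) + Π̃(ξ) = -(1+Π̃(ξ))θ with Π̃(0) = 0. Then -θ/(1+θ) ≤ Π̃(ξ) ≤ 0 for all ξ ≥ 0; in particular Π̃(ξ) > -1. -/
theorem stmt_13 (θ : ℝ) (hθ : 0 < θ) (f : ℝ → ℝ)
    (hf : ∀ ξ : ℝ, 0 ≤ ξ → HasDerivAt f (-(f ξ) - (1 + f ξ) * θ) ξ)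
    (h0 : f 0 = 0) :
    ∀ ξ : ℝ, 0 ≤ ξ → (-θ/(1+θ) ≤ f ξ ∧ f ξ ≤ 0 ∧ -1 < f ξ) := by
  have h1θ : (0:ℝ) < 1 + θ := by linarith
  set c : ℝ := θ / (1 + θ) with hc
  have hcpos : 0 < c := div_pos hθ h1θ
  have hclt1 : c < 1 := (div_lt_one h1θ).mpr (by linarith)
  set g : ℝ → ℝ := fun x => Real.exp ((1 + θ) * x) * (f x + c) with hg
  have key : ∀ ξ : ℝ, 0 ≤ ξ → f ξ = c * Real.exp (-((1 + θ) * ξ)) - c := by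
    intro ξ hξ
    have hcf : ContinuousOn f (Set.Icc 0 ξ) := fun y hy =>
      (hf y hy.1).continuousAt.continuousWithinAt
    have hcg : ContinuousOn g (Set.Icc 0 ξ) :=
      ((Real.continuous_exp.comp (continuous_const.mul continuous_id)).continuousOn).mul
        (hcf.add continuousOn_const)
    have hderiv : ∀ y ∈ Set.Ico (0:ℝ) ξ, HasDerivWithinAt g 0 (Set.Ici y) y := by
      intro y hy
      have hdf := hf y hy.1
      have he : HasDerivAt (fun x => Real.exp ((1 + θ) * x))
          (Real.exp ((1 + θ) * y) * (1 + θ)) y := by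
        simpa using ((hasDerivAt_id y).const_mul (1 + θ)).exp
      have hcθ : (1 + θ) * c = θ := by rw [hc]; field_simp
      have hd : HasDerivAt g 0 y := by
        have h2 := he.mul (hdf.add_const c)
        have hz : Real.exp ((1 + θ) * y) * (1 + θ) * (f y + c) +
            Real.exp ((1 + θ) * y) * (-f y - (1 + f y) * θ) = 0 := by
          linear_combination Real.exp ((1 + θ) * y) * hcθ
        rw [hz] at h2
        exact h2
      exact hd.hasDerivWithinAt
    have hgξ : g ξ = g 0 :=
      constant_of_has_deriv_right_zero hcg hderiv ξ ⟨hξ, le_refl _⟩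
    have hg0 : g 0 = c := by simp [hg, h0]
    have heq : Real.exp ((1 + θ) * ξ) * (f ξ + c) = c := by
      have h3 := hgξ; rw [hg0] at h3; exact h3
    have hexp : (0:ℝ) < Real.exp ((1 + θ) * ξ) := Real.exp_pos _
    have hinv : f ξ + c = c * Real.exp (-((1 + θ) * ξ)) := by
      rw [Real.exp_neg]
      field_simp
      linarith [heq]
    linarith
  intro ξ hξ
  have hfe := key ξ hξ
  have hepos : 0 < Real.exp (-((1 + θ) * ξ)) := Real.exp_pos _
  have hele : Real.exp (-((1 + θ) * ξ)) ≤ 1 := by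
    apply Real.exp_le_one_iff.mpr
    nlinarith
  refine ⟨?_, ?_, ?_⟩
  · rw [hfe, neg_div]
    nlinarith
  · rw [hfe]
    nlinarith
  · rw [hfe]
    nlinarith
end

section
/- Let a, Γ satisfy 0 < a, 1 < Γ < 2, and 0 < a + Γ - 1 < 1, and let Π̃ > -1. Then the high-density squared speed w∞² := (a+Γ-1) / (1 + a·(1+Π̃)^(-(a+Γ-1)/a) / ((Γ-1)(a+Γ))) satisfies 0 < w∞² < 1. -/
theorem stmt_16 (a Γ Pi : ℝ) (ha : 0 < a) (hΓ1 : 1 < Γ) (hΓ2 : Γ < 2)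
    (h1 : 0 < a + Γ - 1) (h2 : a + Γ - 1 < 1) (hPi : -1 < Pi) :
    0 < (a+Γ-1) / (1 + a * (1+Pi) ^ (-(a+Γ-1)/a) / ((Γ-1)*(a+Γ))) ∧
    (a+Γ-1) / (1 + a * (1+Pi) ^ (-(a+Γ-1)/a) / ((Γ-1)*(a+Γ))) < 1 := by
  have ht : (0:ℝ) < (1+Pi) ^ (-(a+Γ-1)/a) :=
    Real.rpow_pos_of_pos (by linarith) _
  have hfrac : 0 < a * (1+Pi) ^ (-(a+Γ-1)/a) / ((Γ-1)*(a+Γ)) := by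
    apply div_pos (mul_pos ha ht)
    apply mul_pos <;> linarith
  have hden : (1:ℝ) < 1 + a * (1+Pi) ^ (-(a+Γ-1)/a) / ((Γ-1)*(a+Γ)) := by linarith
  constructor
  · exact div_pos h1 (by linarith)
  · rw [div_lt_one (by linarith)]; linarith
end

section
/- Define Π̃(ξ) = -e^(-ξ)(ξ-1)·(-e·Ei(ξ-1) + e·Ei(-1) + 1) - 1 for ξ ∈ [0,1), where Ei is the exponential integral. Then Π̃ solves the ODE dΠ̃/dξ + Π̃ = -(1+Π̃)/(1-ξ) with Π̃(0) = 0. -/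
theorem stmt_18 (Ei : ℝ → ℝ)
    (hEi : ∀ x : ℝ, x < 0 → HasDerivAt Ei (Real.exp x / x) x) :
    (∀ ξ ∈ Set.Ico (0:ℝ) 1,
      HasDerivAt
        (fun ξ : ℝ =>
          -(Real.exp (-ξ)) * (ξ - 1) *
            (-(Real.exp 1) * Ei (ξ - 1) + Real.exp 1 * Ei (-1) + 1) - 1)
        (-((-(Real.exp (-ξ)) * (ξ - 1) *
            (-(Real.exp 1) * Ei (ξ - 1) + Real.exp 1 * Ei (-1) + 1) - 1))
          - (1 + (-(Real.exp (-ξ)) * (ξ - 1) *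
            (-(Real.exp 1) * Ei (ξ - 1) + Real.exp 1 * Ei (-1) + 1) - 1)) / (1 - ξ)) ξ) ∧
    (-(Real.exp (-(0:ℝ))) * ((0:ℝ) - 1) *
        (-(Real.exp 1) * Ei ((0:ℝ) - 1) + Real.exp 1 * Ei (-1) + 1) - 1 = 0) := by
  constructor
  · intro ξ hξ
    obtain ⟨h0, h1⟩ := hξ
    have hne : ξ - 1 ≠ 0 := by linarith
    have hEi' : HasDerivAt (fun x : ℝ => Ei (x - 1))
        (Real.exp (ξ - 1) / (ξ - 1)) ξ := by
      have := (hEi (ξ - 1) (by linarith)).comp ξ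
        ((hasDerivAt_id ξ).sub_const 1)
      simpa [Function.comp_def] using this
    have hexp : HasDerivAt (fun x : ℝ => -(Real.exp (-x)))
        (Real.exp (-ξ)) ξ := by
      have := (Real.hasDerivAt_exp (-ξ)).comp ξ ((hasDerivAt_id ξ).neg)
      simpa [Function.comp_def, Pi.neg_def] using this.neg
    have hg : HasDerivAt (fun x : ℝ =>
        -(Real.exp 1) * Ei (x - 1) + Real.exp 1 * Ei (-1) + 1)
        (-(Real.exp 1) * (Real.exp (ξ - 1) / (ξ - 1))) ξ := by
      have := (hEi'.const_mul (-(Real.exp 1))).add_const (Real.exp 1 * Ei (-1))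
      simpa using this.add_const 1
    have hmul := ((hexp.mul ((hasDerivAt_id ξ).sub_const 1)).mul hg).sub_const 1
    convert hmul using 1
    case e'_4 => rfl
    case e'_5 => rfl
    case e'_8 => rfl
    have hE : Real.exp 1 * Real.exp (ξ - 1) = Real.exp ξ := by
      rw [← Real.exp_add]; ring_nf
    have hE2 : Real.exp (-ξ) * Real.exp ξ = 1 := by
      rw [← Real.exp_add]; simp
    have hne2 : (1:ℝ) - ξ ≠ 0 := by linarith
    simp only [id, Pi.mul_apply]
    field_simp
    linear_combination (Real.exp (-ξ)*(ξ-1))*hE + (ξ-1)*hE2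
  · simp
end

section
/- Let Π̃ : [0,1) → ℝ be differentiable with Π̃(0) = 0 and Π̃'(ξ) + Π̃(ξ) = -(1+Π̃(ξ))/(1-ξ) for ξ ∈ [0,1). Then Π̃(ξ) > -1 for all ξ ∈ [0,1). -/
theorem stmt_19 (f : ℝ → ℝ) (h0 : f 0 = 0)
    (hf : ∀ ξ ∈ Set.Ico (0:ℝ) 1,
      HasDerivAt f (-(f ξ) - (1 + f ξ) / (1 - ξ)) ξ) :
    ∀ ξ ∈ Set.Ico (0:ℝ) 1, -1 < f ξ := by
  set h : ℝ → ℝ := fun x => (1 + f x) * Real.exp x / (1 - x) with hh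
  have hder : ∀ x ∈ Set.Ico (0:ℝ) 1, HasDerivAt h (Real.exp x / (1 - x)) x := by
    intro x hx
    have hx1 : (1 : ℝ) - x ≠ 0 := by
      have := hx.2; intro hc; nlinarith
    have hu : HasDerivAt (fun x => (1 + f x) * Real.exp x)
        ((0 + (-(f x) - (1 + f x) / (1 - x))) * Real.exp x + (1 + f x) * Real.exp x) x :=
      ((hasDerivAt_const x (1:ℝ)).add (hf x hx)).mul (Real.hasDerivAt_exp x)
    have hv : HasDerivAt (fun x : ℝ => 1 - x) (0 - 1) x :=
      (hasDerivAt_const x (1:ℝ)).sub (hasDerivAt_id x)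
    have := hu.div hv hx1
    refine HasDerivAt.congr_deriv this ?_
    field_simp
    ring
  intro ξ hξ
  rcases eq_or_lt_of_le hξ.1 with h0ξ | h0ξ
  · simp [← h0ξ, h0]
  · have hsub : Set.Icc (0:ℝ) ξ ⊆ Set.Ico (0:ℝ) 1 := fun y hy =>
      ⟨hy.1, lt_of_le_of_lt hy.2 hξ.2⟩
    have hcont : ContinuousOn h (Set.Icc 0 ξ) := fun y hy =>
      ((hder y (hsub hy)).continuousAt).continuousWithinAt
    have hmono : StrictMonoOn h (Set.Icc 0 ξ) := by
      apply strictMonoOn_of_deriv_pos (convex_Icc 0 ξ) hcont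
      intro y hy
      rw [interior_Icc] at hy
      have hy' : y ∈ Set.Ico (0:ℝ) 1 := ⟨hy.1.le, lt_trans hy.2 hξ.2⟩
      rw [(hder y hy').deriv]
      have : (0:ℝ) < 1 - y := by have := hy'.2; linarith
      positivity
    have h01 : h 0 = 1 := by simp [hh, h0]
    have hlt : h 0 < h ξ :=
      hmono (Set.left_mem_Icc.mpr h0ξ.le) (Set.right_mem_Icc.mpr h0ξ.le) h0ξ
    rw [h01] at hlt
    have h1ξ : (0:ℝ) < 1 - ξ := by have := hξ.2; linarith
    have hexp : (0:ℝ) < Real.exp ξ := Real.exp_pos ξ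
    have : 0 < (1 + f ξ) * Real.exp ξ / (1 - ξ) := lt_trans one_pos hlt
    have hpos : 0 < 1 + f ξ := by
      have h2 : 0 < (1 + f ξ) * Real.exp ξ := by
        have h3 := mul_pos this h1ξ
        rwa [div_mul_cancel₀ _ h1ξ.ne'] at h3
      nlinarith [h2, hexp]
    linarith
end
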